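/- arXiv:1402.4534 — 2 statements merged into one kernel-verified Lean document; each statement's English description precedes it below -/
import Mathlib

section
/- For $1 < \alpha < 2$, the sequence $q_i = \frac{\alpha}{\Gamma(2-\alpha)} \frac{\Gamma(i+1-\alpha)}{\Gamma(i+2)}$, $i \geq 1$, satisfies $\sum_{i \geq 1} i q_i = \frac{1}{\alpha - 1}$. -/
open Real Filter

/-- For `1 < α < 2`, the sequence `q i = α/Γ(2-α) · Γ(i+1-α)/Γ(i+2)`, `i ≥ 1`,
satisfies `∑_{i ≥ 1} i q_i = 1/(α-1)`. -/
theorem stmt_0 (α : ℝ) (hα1 : 1 < α) (hα2 : α < 2) :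
    HasSum (fun i : ℕ => ((i : ℝ) + 1) *
      (α / Real.Gamma (2 - α) *
        (Real.Gamma (((i : ℝ) + 1) + 1 - α) / Real.Gamma (((i : ℝ) + 1) + 2))))
      (1 / (α - 1)) := by
  have hα0 : (0:ℝ) < α := by linarith
  have hα1' : (0:ℝ) < α - 1 := by linarith
  have h2α : (0:ℝ) < 2 - α := by linarith
  have hΓ2α : 0 < Real.Gamma (2 - α) := Real.Gamma_pos_of_pos h2α
  set f : ℕ → ℝ := fun i : ℕ => ((i : ℝ) + 1) *
      (α / Real.Gamma (2 - α) *
        (Real.Gamma (((i : ℝ) + 1) + 1 - α) / Real.Gamma (((i : ℝ) + 1) + 2))) with hf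
  set g : ℕ → ℝ := fun n : ℕ => α / Real.Gamma (2 - α) *
      (((n : ℝ) / (α - 1) + 1 / (α * (α - 1))) *
        (Real.Gamma ((n : ℝ) + 2 - α) / Real.Gamma ((n : ℝ) + 2))) with hg
  -- positivity of Gamma values
  have hΓpos : ∀ n : ℕ, 0 < Real.Gamma ((n : ℝ) + 2 - α) := fun n =>
    Real.Gamma_pos_of_pos (by have := Nat.cast_nonneg (α := ℝ) n; linarith)
  have hΓpos' : ∀ n : ℕ, 0 < Real.Gamma ((n : ℝ) + 2) := fun n =>
    Real.Gamma_pos_of_pos (by positivity)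
  -- telescoping identity
  have hpt : ∀ i : ℕ, f i = g i - g (i + 1) := by
    intro i
    have hi0 : (0:ℝ) ≤ (i : ℝ) := Nat.cast_nonneg i
    have h1 : Real.Gamma ((i : ℝ) + 1 + 2 - α)
        = ((i : ℝ) + 2 - α) * Real.Gamma ((i : ℝ) + 2 - α) := by
      rw [show (i : ℝ) + 1 + 2 - α = ((i : ℝ) + 2 - α) + 1 by ring,
        Real.Gamma_add_one (by linarith)]
    have h2 : Real.Gamma ((i : ℝ) + 1 + 2) = ((i : ℝ) + 2) * Real.Gamma ((i : ℝ) + 2) := by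
      rw [show (i : ℝ) + 1 + 2 = ((i : ℝ) + 2) + 1 by ring,
        Real.Gamma_add_one (by positivity)]
    have h3 : Real.Gamma ((i : ℝ) + 1 + 1 - α) = Real.Gamma ((i : ℝ) + 2 - α) := by
      congr 1; ring
    simp only [hf, hg, Nat.cast_add, Nat.cast_one, h1, h2, h3]
    have hΓ2 := (hΓpos' i).ne'
    have hi2 : ((i : ℝ) + 2) ≠ 0 := by positivity
    field_simp
    ring
  -- value at 0
  have hg0 : g 0 = 1 / (α - 1) := by
    simp only [hg, Nat.cast_zero]
    rw [show (0:ℝ) + 2 - α = 2 - α by ring, show (0:ℝ) + 2 = (2:ℝ) by norm_num,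
      Real.Gamma_two]
    field_simp
    ring
  -- nonnegativity of terms
  have hfnn : ∀ i : ℕ, 0 ≤ f i := by
    intro i
    have hi0 : (0:ℝ) ≤ (i : ℝ) := Nat.cast_nonneg i
    have h4 : (0:ℝ) < Real.Gamma (((i : ℝ) + 1) + 2) := Real.Gamma_pos_of_pos (by positivity)
    have h5 : (0:ℝ) < Real.Gamma (((i : ℝ) + 1) + 1 - α) :=
      Real.Gamma_pos_of_pos (by linarith)
    exact mul_nonneg (by positivity)
      (mul_nonneg (by positivity) (div_nonneg h5.le h4.le))
  -- g tends to 0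
  have hglim : Tendsto g atTop (nhds 0) := by
    set C : ℝ := α / Real.Gamma (2 - α) * (1 / (α - 1) + 1 / (α * (α - 1))) with hC
    have hCpos : 0 < C := by
      have : (0:ℝ) < 1 / (α - 1) + 1 / (α * (α - 1)) := by positivity
      positivity
    have hbound : ∀ n : ℕ, 1 ≤ n → g n ≤ C * (n : ℝ) ^ (1 - α) := by
      intro n hn
      have hn1 : (1:ℝ) ≤ (n : ℝ) := by exact_mod_cast hn
      have hn0 : (0:ℝ) < (n : ℝ) := by linarith
      -- log-convexity: Γ(n+2-α) ≤ Γ(n)^(α-1) * Γ(n+1)^(2-α) = Γ(n) * n^(2-α)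
      have hlc := Real.Gamma_mul_add_mul_le_rpow_Gamma_mul_rpow_Gamma
        (s := (n:ℝ)) (t := (n:ℝ) + 1) (a := α - 1) (b := 2 - α)
        hn0 (by linarith) hα1' h2α (by ring)
      rw [show (α - 1) * (n:ℝ) + (2 - α) * ((n:ℝ) + 1) = (n:ℝ) + 2 - α by ring] at hlc
      have hΓn : 0 < Real.Gamma (n : ℝ) := Real.Gamma_pos_of_pos hn0
      have hΓn1 : Real.Gamma ((n:ℝ) + 1) = (n:ℝ) * Real.Gamma (n:ℝ) :=
        Real.Gamma_add_one hn0.ne'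
      have hrhs : Real.Gamma (n:ℝ) ^ (α - 1) * Real.Gamma ((n:ℝ) + 1) ^ (2 - α)
          = Real.Gamma (n:ℝ) * (n:ℝ) ^ (2 - α) := by
        rw [hΓn1, Real.mul_rpow hn0.le hΓn.le, ← mul_assoc,
          mul_comm (Real.Gamma (n:ℝ) ^ (α - 1)) ((n:ℝ) ^ (2 - α)), mul_assoc,
          ← Real.rpow_add hΓn, show α - 1 + (2 - α) = 1 by ring, Real.rpow_one]
        ring
      rw [hrhs] at hlc
      have hΓn2 : Real.Gamma ((n:ℝ) + 2) = ((n:ℝ) + 1) * ((n:ℝ) * Real.Gamma (n:ℝ)) := by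
        rw [show (n:ℝ) + 2 = ((n:ℝ) + 1) + 1 by ring,
          Real.Gamma_add_one (by positivity), hΓn1]
      have hratio : Real.Gamma ((n : ℝ) + 2 - α) / Real.Gamma ((n : ℝ) + 2)
          ≤ (n:ℝ) ^ (1 - α) / ((n:ℝ) + 1) := by
        rw [hΓn2, div_le_div_iff₀ (by positivity) (by positivity)]
        calc Real.Gamma ((n : ℝ) + 2 - α) * ((n:ℝ) + 1)
            ≤ Real.Gamma (n:ℝ) * (n:ℝ) ^ (2 - α) * ((n:ℝ) + 1) := by
              apply mul_le_mul_of_nonneg_right hlc (by positivity)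
          _ = (n:ℝ) ^ (1 - α) * (((n:ℝ) + 1) * ((n:ℝ) * Real.Gamma (n:ℝ))) := by
              rw [show (2 - α : ℝ) = 1 + (1 - α) by ring, Real.rpow_add hn0,
                Real.rpow_one]
              ring
      have hcoef : (n : ℝ) / (α - 1) + 1 / (α * (α - 1))
          ≤ (1 / (α - 1) + 1 / (α * (α - 1))) * ((n:ℝ) + 1) := by
        have e1 : (n : ℝ) / (α - 1) ≤ ((n:ℝ) + 1) / (α - 1) := by
          gcongr; linarith
        have e2 : 1 / (α * (α - 1)) ≤ ((n:ℝ) + 1) / (α * (α - 1)) := by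
          gcongr
          linarith
        calc (n : ℝ) / (α - 1) + 1 / (α * (α - 1))
            ≤ ((n:ℝ) + 1) / (α - 1) + ((n:ℝ) + 1) / (α * (α - 1)) := add_le_add e1 e2
          _ = (1 / (α - 1) + 1 / (α * (α - 1))) * ((n:ℝ) + 1) := by ring
      have hKpos : (0:ℝ) < α / Real.Gamma (2 - α) := by positivity
      calc g n ≤ α / Real.Gamma (2 - α) *
          (((1 / (α - 1) + 1 / (α * (α - 1))) * ((n:ℝ) + 1)) *
            ((n:ℝ) ^ (1 - α) / ((n:ℝ) + 1))) := by
            rw [hg]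
            apply mul_le_mul_of_nonneg_left _ hKpos.le
            apply mul_le_mul hcoef hratio
              (div_nonneg (hΓpos n).le (hΓpos' n).le) (by positivity)
        _ = C * (n : ℝ) ^ (1 - α) := by
            rw [hC]
            field_simp
    have hgnn : ∀ n : ℕ, 0 ≤ g n := by
      intro n
      exact mul_nonneg (by positivity)
        (mul_nonneg (by positivity) (div_nonneg (hΓpos n).le (hΓpos' n).le))
    have hlim0 : Tendsto (fun n : ℕ => C * (n : ℝ) ^ (1 - α)) atTop (nhds 0) := by
      have h := (tendsto_rpow_neg_atTop hα1').comp
        (tendsto_natCast_atTop_atTop : Tendsto (fun n : ℕ => (n:ℝ)) atTop atTop)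
      have h2 : Tendsto (fun n : ℕ => (n : ℝ) ^ (1 - α)) atTop (nhds 0) := by
        simpa [show -(α - 1) = 1 - α by ring, Function.comp_def] using h
      simpa using h2.const_mul C
    exact squeeze_zero' (Eventually.of_forall hgnn)
      (eventually_atTop.mpr ⟨1, hbound⟩) hlim0
  -- assemble
  rw [hasSum_iff_tendsto_nat_of_nonneg hfnn _]
  have hsum : ∀ n : ℕ, ∑ i ∈ Finset.range n, f i = g 0 - g n := by
    intro n
    rw [show (∑ i ∈ Finset.range n, f i) = ∑ i ∈ Finset.range n, (g i - g (i+1)) from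
      Finset.sum_congr rfl fun i _ => hpt i]
    exact Finset.sum_range_sub' g n
  simp only [hsum]
  rw [← hg0]
  simpa using (tendsto_const_nhds (x := g 0)).sub hglim
end

section
/- Let $1 < \alpha < 2$. Consider the map $T: (-\infty, 0] \times (0,\infty) \to (0,1] \times (0,\infty)$ given by $T(s,u) = (m(-s),\, m(-s)\,u)$ where $m(r) = \big(\frac{\alpha\Gamma(\alpha)}{r + \alpha\Gamma(\alpha)}\big)^{1/(\alpha-1)}$. Then the pushforward under $T$ of the measure $ds \times \frac{1}{\Gamma(\alpha)\Gamma(2-\alpha)} u^{-1-\alpha}\, du$ is the measure $dx \times \frac{\alpha(\alpha-1)}{\Gamma(2-\alpha)} y^{-\alpha-1}\, dy$ on $(0,1] \times (0,\infty)$. -/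
open Real Set MeasureTheory

private lemma lintegral_image_eq_lintegral_abs_deriv_mul_aux
    {s : Set ℝ} {f f' : ℝ → ℝ} (hs : MeasurableSet s)
    (hf' : ∀ x ∈ s, HasDerivWithinAt f (f' x) s x) (hf : InjOn f s) (g : ℝ → ENNReal) :
    ∫⁻ x in f '' s, g x = ∫⁻ x in s, ENNReal.ofReal |f' x| * g (f x) := by
  simpa only [ContinuousLinearMap.det_toSpanSingleton] using
    MeasureTheory.lintegral_image_eq_lintegral_abs_det_fderiv_mul volume hs
      (fun x hx => (hf' x hx).hasFDerivWithinAt) hf g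

/-- The pushforward of `ds × (1/(Γ(α)Γ(2-α))) u^{-1-α} du` on `(-∞,0] × (0,∞)` under
`(s,u) ↦ (m(-s), m(-s)u)`, with `m(r) = (αΓ(α)/(r+αΓ(α)))^{1/(α-1)}`, is the measure
`dx × (α(α-1)/Γ(2-α)) y^{-α-1} dy` on `(0,1] × (0,∞)`. -/
theorem stmt_10 (α : ℝ) (hα1 : 1 < α) (hα2 : α < 2)
    (m : ℝ → ℝ)
    (hm : ∀ r : ℝ, m r = (α * Real.Gamma α / (r + α * Real.Gamma α)) ^ (1 / (α - 1)))
    (T : ℝ × ℝ → ℝ × ℝ) (hT : ∀ p : ℝ × ℝ, T p = (m (-p.1), m (-p.1) * p.2)) :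
    Measure.map T
      (((volume.restrict (Iic (0 : ℝ))).prod (volume.restrict (Ioi (0 : ℝ)))).withDensity
        (fun p => ENNReal.ofReal
          (1 / (Real.Gamma α * Real.Gamma (2 - α)) * p.2 ^ (-1 - α)))) =
    (((volume.restrict (Ioc (0 : ℝ) 1)).prod (volume.restrict (Ioi (0 : ℝ)))).withDensity
        (fun p => ENNReal.ofReal
          (α * (α - 1) / Real.Gamma (2 - α) * p.2 ^ (-α - 1)))) := by
  have hα0 : (0:ℝ) < α := by linarith
  have hα1' : (0:ℝ) < α - 1 := by linarith
  have hΓα : 0 < Real.Gamma α := Real.Gamma_pos_of_pos hα0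
  have hΓ2 : 0 < Real.Gamma (2 - α) := Real.Gamma_pos_of_pos (by linarith)
  set A : ℝ := α * Real.Gamma α with hAdef
  have hA : 0 < A := mul_pos hα0 hΓα
  set c : ℝ := 1 / (Real.Gamma α * Real.Gamma (2 - α)) with hcdef
  set C : ℝ := α * (α - 1) / Real.Gamma (2 - α) with hCdef
  -- basic facts about m
  have hm_pos : ∀ s : ℝ, s ≤ 0 → 0 < m (-s) := by
    intro s hs
    rw [hm]
    exact Real.rpow_pos_of_pos (div_pos hA (by linarith)) _
  have hm_le1 : ∀ s : ℝ, s ≤ 0 → m (-s) ≤ 1 := by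
    intro s hs
    rw [hm]
    apply Real.rpow_le_one (le_of_lt (div_pos hA (by linarith)))
    · rw [div_le_one (by linarith)]; linarith
    · positivity
  -- the inverse map g
  set g : ℝ → ℝ := fun x => A - A * x ^ (1 - α) with hgdef
  have hgm : ∀ s : ℝ, s ≤ 0 → g (m (-s)) = s := by
    intro s hs
    have hbase : (0:ℝ) < A / (-s + A) := div_pos hA (by linarith)
    have h1 : m (-s) ^ (1 - α) = (A / (-s + A)) ^ ((1 / (α - 1)) * (1 - α)) := by
      rw [hm, ← Real.rpow_mul hbase.le]
    have h2 : (1 / (α - 1)) * (1 - α) = -1 := by field_simp; ring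
    have h3 : m (-s) ^ (1 - α) = (-s + A) / A := by
      rw [h1, h2, Real.rpow_neg_one, inv_div]
    simp only [hgdef, h3]
    field_simp
    ring
  have hmg : ∀ x ∈ Ioc (0:ℝ) 1, m (-(g x)) = x := by
    intro x hx
    have hx0 : (0:ℝ) < x := hx.1
    have hxp : (0:ℝ) < x ^ (1 - α) := Real.rpow_pos_of_pos hx0 _
    have h1 : -(g x) + A = A * x ^ (1 - α) := by simp only [hgdef]; ring
    have h2 : A / (A * x ^ (1 - α)) = x ^ (α - 1) := by
      rw [div_eq_iff (by positivity),
        show x ^ (α - 1) * (A * x ^ (1 - α)) = A * (x ^ (α - 1) * x ^ (1 - α)) by ring,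
        ← Real.rpow_add hx0, show (α - 1) + (1 - α) = (0:ℝ) by ring, Real.rpow_zero, mul_one]
    rw [hm, h1, h2, ← Real.rpow_mul hx0.le]
    rw [mul_one_div, div_self (ne_of_gt hα1'), Real.rpow_one]
  have himg : g '' Ioc (0:ℝ) 1 = Iic (0:ℝ) := by
    ext s
    constructor
    · rintro ⟨x, hx, rfl⟩
      have h1 : (1:ℝ) ≤ x ^ (1 - α) :=
        Real.one_le_rpow_of_pos_of_le_one_of_nonpos hx.1 hx.2 (by linarith)
      simp only [hgdef, mem_Iic]
      nlinarith
    · intro hs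
      exact ⟨m (-s), ⟨hm_pos s hs, hm_le1 s hs⟩, hgm s hs⟩
  have hginj : InjOn g (Ioc (0:ℝ) 1) := by
    intro x hx y hy hxy
    rw [← hmg x hx, ← hmg y hy, hxy]
  have hg' : ∀ x ∈ Ioc (0:ℝ) 1,
      HasDerivWithinAt g (A * (α - 1) * x ^ (-α)) (Ioc (0:ℝ) 1) x := by
    intro x hx
    have h0 : HasDerivAt (fun y : ℝ => y ^ (1 - α)) ((1 - α) * x ^ (1 - α - 1)) x :=
      Real.hasDerivAt_rpow_const (Or.inl (ne_of_gt hx.1))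
    have h1 : HasDerivAt g (-(A * ((1 - α) * x ^ (1 - α - 1)))) x :=
      (h0.const_mul A).const_sub A
    have h2 : -(A * ((1 - α) * x ^ (1 - α - 1))) = A * (α - 1) * x ^ (-α) := by
      rw [show (1 - α - 1 : ℝ) = -α by ring]; ring
    rw [h2] at h1
    exact h1.hasDerivWithinAt
  -- key identity for all functions F
  have key : ∀ F : ℝ × ℝ → ENNReal,
      (∫⁻ s in Iic (0:ℝ), ∫⁻ u in Ioi (0:ℝ),
        ENNReal.ofReal (c * u ^ (-1 - α)) * F (m (-s), m (-s) * u)) =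
      ∫⁻ x in Ioc (0:ℝ) 1, ∫⁻ y in Ioi (0:ℝ),
        ENNReal.ofReal (C * y ^ (-α - 1)) * F (x, y) := by
    intro F
    rw [← himg]
    rw [lintegral_image_eq_lintegral_abs_deriv_mul_aux measurableSet_Ioc hg' hginj]
    apply setLIntegral_congr_fun measurableSet_Ioc
    intro x hx
    have hx0 : (0:ℝ) < x := hx.1
    dsimp only
    rw [hmg x hx]
    -- inner change of variables
    have himg2 : (fun u : ℝ => x * u) '' Ioi (0:ℝ) = Ioi (0:ℝ) := by
      ext y
      constructor
      · rintro ⟨u, hu, rfl⟩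
        exact mul_pos hx0 hu
      · intro hy
        exact ⟨y / x, div_pos hy hx0, by field_simp⟩
    have hinj2 : InjOn (fun u : ℝ => x * u) (Ioi (0:ℝ)) :=
      (mul_right_injective₀ (ne_of_gt hx0)).injOn
    have hder2 : ∀ u ∈ Ioi (0:ℝ),
        HasDerivWithinAt (fun u : ℝ => x * u) x (Ioi (0:ℝ)) u := by
      intro u _
      simpa using ((hasDerivAt_id u).const_mul x).hasDerivWithinAt
    rw [show (∫⁻ y in Ioi (0:ℝ), ENNReal.ofReal (C * y ^ (-α - 1)) * F (x, y)) =
        ∫⁻ y in (fun u : ℝ => x * u) '' Ioi (0:ℝ),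
          ENNReal.ofReal (C * y ^ (-α - 1)) * F (x, y) by rw [himg2]]
    rw [lintegral_image_eq_lintegral_abs_deriv_mul_aux measurableSet_Ioi hder2 hinj2]
    rw [← lintegral_const_mul' _ _ ENNReal.ofReal_ne_top]
    apply setLIntegral_congr_fun measurableSet_Ioi
    intro u hu
    have hu0 : (0:ℝ) < u := hu
    have hgx0 : (0:ℝ) < A * (α - 1) * x ^ (-α) := by positivity
    dsimp only
    rw [abs_of_pos hgx0, abs_of_pos hx0, ← mul_assoc, ← mul_assoc,
      ← ENNReal.ofReal_mul (by positivity), ← ENNReal.ofReal_mul hx0.le]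
    congr 2
    have hxu : (x * u) ^ (-α - 1) = x ^ (-α - 1) * u ^ (-α - 1) :=
      Real.mul_rpow hx0.le hu0.le
    have hxx : x * x ^ (-α - 1) = x ^ (-α) := by
      nth_rewrite 1 [← Real.rpow_one x]
      rw [← Real.rpow_add hx0]; norm_num
    have hΓαne : Real.Gamma α ≠ 0 := ne_of_gt hΓα
    have hΓ2ne : Real.Gamma (2 - α) ≠ 0 := ne_of_gt hΓ2
    have hc : A * (α - 1) * c = C := by
      rw [hcdef, hCdef, hAdef]
      field_simp
    rw [hxu, show (-1 - α : ℝ) = -α - 1 by ring]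
    calc A * (α - 1) * x ^ (-α) * (c * u ^ (-α - 1))
        = (A * (α - 1) * c) * x ^ (-α) * u ^ (-α - 1) := by ring
      _ = C * x ^ (-α) * u ^ (-α - 1) := by rw [hc]
      _ = x * (C * (x ^ (-α - 1) * u ^ (-α - 1))) := by
          rw [show x * (C * (x ^ (-α - 1) * u ^ (-α - 1)))
              = C * (x * x ^ (-α - 1)) * u ^ (-α - 1) by ring, hxx]
  -- measurability
  have hrpow : ∀ e : ℝ, Measurable fun t : ℝ => t ^ e := by
    intro e; measurability
  have hmm : Measurable m := by
    have h : m = fun r => (A / (r + A)) ^ (1 / (α - 1)) := funext hm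
    rw [h]
    exact (hrpow (1 / (α - 1))).comp (measurable_const.div (measurable_id.add_const A))
  have hTm : Measurable T := by
    have : T = fun p : ℝ × ℝ => (m (-p.1), m (-p.1) * p.2) := funext hT
    rw [this]
    exact (hmm.comp measurable_fst.neg).prodMk
      ((hmm.comp measurable_fst.neg).mul measurable_snd)
  have hd1 : Measurable fun p : ℝ × ℝ => ENNReal.ofReal (c * p.2 ^ (-1 - α)) :=
    (((hrpow (-1 - α)).comp measurable_snd).const_mul c).ennreal_ofReal
  -- now the measure equality
  ext E hE
  rw [Measure.map_apply hTm hE, withDensity_apply _ (hTm hE), withDensity_apply _ hE]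
  have ind1 : ∀ (B : Set (ℝ × ℝ)) (d : ℝ × ℝ → ENNReal) (G : ℝ × ℝ → ℝ × ℝ),
      (G ⁻¹' B).indicator d = fun p => d p * B.indicator 1 (G p) := by
    intro B d G
    funext p
    by_cases h : G p ∈ B <;>
      simp [Set.indicator_apply, h]
  rw [← lintegral_indicator (hTm hE), ← lintegral_indicator hE,
    ind1 E _ T, show E.indicator
      (fun p : ℝ × ℝ => ENNReal.ofReal (C * p.2 ^ (-α - 1)))
      = fun p => ENNReal.ofReal (C * p.2 ^ (-α - 1)) * E.indicator 1 p by
        have := ind1 E (fun p : ℝ × ℝ => ENNReal.ofReal (C * p.2 ^ (-α - 1))) id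
        simpa using this]
  rw [lintegral_prod _ (by
    exact (hd1.mul ((measurable_one.indicator hE).comp hTm)).aemeasurable),
    lintegral_prod _ (by
      have : Measurable fun p : ℝ × ℝ => ENNReal.ofReal (C * p.2 ^ (-α - 1)) :=
        (((hrpow (-α - 1)).comp measurable_snd).const_mul C).ennreal_ofReal
      exact (this.mul (measurable_one.indicator hE)).aemeasurable)]
  simp only [hT]
  exact key (E.indicator 1)
end
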